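/- Let n₁, n₂ be positive integers, l, u ∈ ℝ^{n₁} with 0 ≤ l_i ≤ u_i and 0 < u_i for all i, and scalars L, M ∈ ℝ with 0 ≤ L ≤ M and u_i ≤ M for all i. Define U^row+(l,u,L,M) = { W ∈ ℝ^{n₁×n₂} : W_{ij} ≥ 0 for all i, j; l_i ≤ Σ_{j=1}^{n₂} W_{ij} ≤ u_i for each i; L ≤ Σ_{i=1}^{n₁} Σ_{j=1}^{n₂} W_{ij} ≤ M; rank(W) ≤ 1 }. Then the convex hull of U^row+(l,u,L,M) equals the projection onto W of the polyhedron { (W, t) ∈ ℝ^{n₁×n₂} × ℝ^{n₂} : Σ_{j=1}^{n₂} t_j = 1; t_j ≥ 0 for all j; L t_j ≤ Σ_{i=1}^{n₁} W_{ij} ≤ M t_j for all j; l_i t_j ≤ W_{ij} ≤ u_i t_j for all i, j }. -/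
import Mathlib

open Finset Matrix

/-- A matrix all of whose columns are multiples of a fixed vector has rank at most one. -/
lemma aux_rank_le_one {n₁ n₂ : ℕ} (W : Matrix (Fin n₁) (Fin n₂) ℝ)
    (v : Fin n₁ → ℝ) (h : ∀ j, ∃ c : ℝ, Wᵀ j = c • v) : W.rank ≤ 1 := by
  rw [Matrix.rank, Matrix.range_mulVecLin]
  have hle : Submodule.span ℝ (Set.range Wᵀ) ≤ Submodule.span ℝ {v} := by
    rw [Submodule.span_le]
    rintro _ ⟨j, rfl⟩
    obtain ⟨c, hc⟩ := h j
    rw [hc]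
    exact Submodule.smul_mem _ _ (Submodule.mem_span_singleton_self v)
  calc Module.finrank ℝ (Submodule.span ℝ (Set.range Wᵀ))
      ≤ Module.finrank ℝ (Submodule.span ℝ ({v} : Set (Fin n₁ → ℝ))) :=
        Submodule.finrank_mono hle
    _ ≤ 1 := by simpa using finrank_span_le_card ({v} : Set (Fin n₁ → ℝ))

/-- A matrix of rank at most one has all columns multiples of a fixed vector. -/
lemma aux_cols {n₁ n₂ : ℕ} (W : Matrix (Fin n₁) (Fin n₂) ℝ) (h : W.rank ≤ 1) :
    ∃ v : Fin n₁ → ℝ, ∀ j, ∃ c : ℝ, ∀ i, W i j = c * v i := by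
  rw [Matrix.rank, Submodule.finrank_le_one_iff_isPrincipal] at h
  obtain ⟨v, hv⟩ := h.principal
  refine ⟨v, fun j => ?_⟩
  have hmem : Wᵀ j ∈ LinearMap.range W.mulVecLin := by
    rw [Matrix.range_mulVecLin]
    exact Submodule.subset_span ⟨j, rfl⟩
  rw [hv, Submodule.mem_span_singleton] at hmem
  obtain ⟨c, hc⟩ := hmem
  exact ⟨c, fun i => (congrFun hc i).symm⟩

/-- The convex hull of the row-bounded rank-1 set with an additional bound on the
total entry sum, U^row+(l,u,L,M), equals the projection of the extended
formulation onto the W variables. -/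
theorem statement14 (n₁ n₂ : ℕ) (hn₁ : 0 < n₁) (hn₂ : 0 < n₂)
    (l u : Fin n₁ → ℝ) (L M : ℝ)
    (hl : ∀ i, 0 ≤ l i) (hlu : ∀ i, l i ≤ u i) (hu : ∀ i, 0 < u i)
    (hL : 0 ≤ L) (hLM : L ≤ M) (huM : ∀ i, u i ≤ M) :
    convexHull ℝ
      {W : Matrix (Fin n₁) (Fin n₂) ℝ |
        (∀ i j, 0 ≤ W i j) ∧ (∀ i, l i ≤ ∑ j, W i j ∧ ∑ j, W i j ≤ u i) ∧
        (L ≤ ∑ i, ∑ j, W i j ∧ ∑ i, ∑ j, W i j ≤ M) ∧ W.rank ≤ 1} =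
    {W : Matrix (Fin n₁) (Fin n₂) ℝ | ∃ t : Fin n₂ → ℝ,
      (∑ j, t j) = 1 ∧ (∀ j, 0 ≤ t j) ∧
      (∀ j, L * t j ≤ ∑ i, W i j ∧ ∑ i, W i j ≤ M * t j) ∧
      (∀ i j, l i * t j ≤ W i j ∧ W i j ≤ u i * t j)} := by
  classical
  have hM0 : 0 ≤ M := le_trans hL hLM
  apply Set.Subset.antisymm
  · apply convexHull_min
    · -- the rank-1 set is contained in the projection
      rintro W ⟨hpos, hrow, ⟨hLs, hsM⟩, hrank⟩
      set s : ℝ := ∑ i, ∑ j, W i j with hs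
      have hs0 : 0 ≤ s := Finset.sum_nonneg fun i _ =>
        Finset.sum_nonneg fun j _ => hpos i j
      by_cases hsz : s = 0
      · -- the zero matrix case
        have hW0 : ∀ i j, W i j = 0 := by
          intro i j
          have hrow0 : ∀ i ∈ Finset.univ, (∑ j, W i j) = 0 := by
            rw [← Finset.sum_eq_zero_iff_of_nonneg
              (fun i _ => Finset.sum_nonneg fun j _ => hpos i j)]
            exact hsz
          have := (Finset.sum_eq_zero_iff_of_nonneg (fun j _ => hpos i j)).mp
            (hrow0 i (Finset.mem_univ i)) j (Finset.mem_univ j)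
          exact this
        have hL0 : L = 0 := le_antisymm (hsz ▸ hLs) hL
        have hl0 : ∀ i, l i = 0 := fun i => le_antisymm
          (by simpa [hW0] using (hrow i).1) (hl i)
        refine ⟨fun j => if j = ⟨0, hn₂⟩ then 1 else 0, by simp, ?_, ?_, ?_⟩
        · intro j; dsimp only; split <;> norm_num
        · intro j
          constructor
          · simp [hL0, hW0]
          · have : (0:ℝ) ≤ M * (if j = ⟨0, hn₂⟩ then 1 else 0) := by
              apply mul_nonneg hM0; split <;> norm_num
            simpa [hW0] using this
        · intro i j
          constructor
          · simp [hl0, hW0]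
          · have : (0:ℝ) ≤ u i * (if j = ⟨0, hn₂⟩ then 1 else 0) := by
              apply mul_nonneg (hu i).le; split <;> norm_num
            simpa [hW0] using this
      · have hspos : 0 < s := lt_of_le_of_ne hs0 (Ne.symm hsz)
        set t : Fin n₂ → ℝ := fun j => (∑ i, W i j) / s with ht
        have ht0 : ∀ j, 0 ≤ t j := fun j =>
          div_nonneg (Finset.sum_nonneg fun i _ => hpos i j) hs0
        have hcolsum : ∑ j, ∑ i, W i j = s := by rw [hs]; exact Finset.sum_comm
        have hct : ∀ j, (∑ i, W i j) = s * t j := by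
          intro j; rw [ht]; field_simp
        have key : ∀ i j, W i j * s = (∑ j', W i j') * (∑ i', W i' j) := by
          obtain ⟨v, hv⟩ := aux_cols W hrank
          choose d hd using hv
          intro i j
          simp only [hs, hd]
          simp only [← Finset.sum_mul, ← Finset.mul_sum]
          ring
        have hWt : ∀ i j, W i j = (∑ j', W i j') * t j := by
          intro i j
          have h1 : W i j * s = ((∑ j', W i j') * t j) * s := by
            rw [key i j, hct j]; ring
          exact mul_right_cancel₀ hsz h1
        refine ⟨t, ?_, ht0, ?_, ?_⟩
        · rw [ht, ← Finset.sum_div, hcolsum, div_self hsz]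
        · intro j
          rw [hct j]
          exact ⟨mul_le_mul_of_nonneg_right hLs (ht0 j),
            mul_le_mul_of_nonneg_right hsM (ht0 j)⟩
        · intro i j
          rw [hWt i j]
          exact ⟨mul_le_mul_of_nonneg_right (hrow i).1 (ht0 j),
            mul_le_mul_of_nonneg_right (hrow i).2 (ht0 j)⟩
    · -- the projection is convex
      rintro W₁ hW₁ W₂ hW₂ a b ha hb hab
      obtain ⟨t₁, ht₁s, ht₁0, ht₁c, ht₁r⟩ := hW₁
      obtain ⟨t₂, ht₂s, ht₂0, ht₂c, ht₂r⟩ := hW₂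
      refine ⟨fun j => a * t₁ j + b * t₂ j, ?_, ?_, ?_, ?_⟩
      · simp only [Finset.sum_add_distrib, ← Finset.mul_sum, ht₁s, ht₂s]
        simpa using hab
      · intro j
        exact add_nonneg (mul_nonneg ha (ht₁0 j)) (mul_nonneg hb (ht₂0 j))
      · intro j
        have e1 : ∑ i, (a • W₁ + b • W₂) i j = a * ∑ i, W₁ i j + b * ∑ i, W₂ i j := by
          simp [Matrix.add_apply, Matrix.smul_apply, smul_eq_mul,
            Finset.sum_add_distrib, Finset.mul_sum]
        rw [e1]
        dsimp only
        have h1 := (ht₁c j).1; have h2 := (ht₂c j).1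
        have h3 := (ht₁c j).2; have h4 := (ht₂c j).2
        constructor
        · nlinarith [mul_le_mul_of_nonneg_left h1 ha, mul_le_mul_of_nonneg_left h2 hb]
        · nlinarith [mul_le_mul_of_nonneg_left h3 ha, mul_le_mul_of_nonneg_left h4 hb]
      · intro i j
        have e1 : (a • W₁ + b • W₂) i j = a * W₁ i j + b * W₂ i j := by
          simp [Matrix.add_apply, Matrix.smul_apply, smul_eq_mul]
        rw [e1]
        dsimp only
        have h1 := (ht₁r i j).1; have h2 := (ht₂r i j).1
        have h3 := (ht₁r i j).2; have h4 := (ht₂r i j).2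
        constructor
        · nlinarith [mul_le_mul_of_nonneg_left h1 ha, mul_le_mul_of_nonneg_left h2 hb]
        · nlinarith [mul_le_mul_of_nonneg_left h3 ha, mul_le_mul_of_nonneg_left h4 hb]
  · -- projection ⊆ convex hull
    rintro W ⟨t, hts, ht0, htc, htr⟩
    have hWpos : ∀ i j, 0 ≤ W i j := fun i j =>
      le_trans (mul_nonneg (hl i) (ht0 j)) (htr i j).1
    have hW0 : ∀ i j, t j = 0 → W i j = 0 := fun i j hj =>
      le_antisymm (by simpa [hj] using (htr i j).2) (hWpos i j)
    set F : Finset (Fin n₂) := Finset.univ.filter (fun j => t j ≠ 0) with hF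
    set P : Fin n₂ → Matrix (Fin n₁) (Fin n₂) ℝ :=
      fun j => Matrix.of (fun i j' => if j' = j then W i j / t j else 0) with hP
    have hsumF : ∑ j ∈ F, t j = 1 := by
      rw [hF, Finset.sum_filter_ne_zero]; exact hts
    have hWc : W = F.centerMass t P := by
      rw [Finset.centerMass, hsumF]
      funext i j'
      rw [inv_one, one_smul]
      rw [show (∑ j ∈ F, t j • P j) i j' = ∑ j ∈ F, t j * (P j i j') by
        simp [Matrix.sum_apply]]
      simp only [hP, Matrix.of_apply]
      rw [Finset.sum_congr rfl (fun j _ => mul_ite (j' = j) (t j) (W i j / t j) 0)]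
      simp only [mul_zero]
      rw [Finset.sum_ite_eq F j' (fun j => t j * (W i j / t j))]
      by_cases hj : j' ∈ F
      · rw [if_pos hj]
        have htj : t j' ≠ 0 := (Finset.mem_filter.mp hj).2
        field_simp
      · rw [if_neg hj]
        have htj : t j' = 0 := by
          by_contra h
          exact hj (Finset.mem_filter.mpr ⟨Finset.mem_univ _, h⟩)
        exact hW0 i j' htj
    rw [hWc]
    apply Finset.centerMass_mem_convexHull
    · exact fun j _ => ht0 j
    · rw [hsumF]; norm_num
    · intro j hj
      have htj : t j ≠ 0 := (Finset.mem_filter.mp hj).2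
      have htjpos : 0 < t j := lt_of_le_of_ne (ht0 j) (Ne.symm htj)
      refine ⟨?_, ?_, ?_, ?_⟩
      · intro i j'
        simp only [hP, Matrix.of_apply]
        split
        · exact div_nonneg (hWpos i j) htjpos.le
        · exact le_refl 0
      · intro i
        have hsum : ∑ j', P j i j' = W i j / t j := by
          simp [hP]
        rw [hsum]
        exact ⟨(le_div_iff₀ htjpos).mpr (htr i j).1,
          (div_le_iff₀ htjpos).mpr (htr i j).2⟩
      · have hsum : ∑ i, ∑ j', P j i j' = (∑ i, W i j) / t j := by
          simp [hP, Finset.sum_div]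
        rw [hsum]
        exact ⟨(le_div_iff₀ htjpos).mpr (htc j).1,
          (div_le_iff₀ htjpos).mpr (htc j).2⟩
      · apply aux_rank_le_one (P j) (fun i => W i j / t j)
        intro j'
        by_cases h : j' = j
        · refine ⟨1, ?_⟩
          funext i
          simp [hP, Matrix.transpose_apply, h]
        · refine ⟨0, ?_⟩
          funext i
          simp [hP, Matrix.transpose_apply, h]
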